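/- arXiv:2311.11536 — 3 statements merged into one kernel-verified Lean document; each statement's English description precedes it below -/
import Mathlib

section
/- Let a : ℝ → ℝ be L-Lipschitz with a(0) = 0, let s : ℝ → ℝ be measurable, odd, with |s(x)| ≤ S_∞ for all x. Define Ψ(σ, x, m) = m(σ) ∬_{[0,1]²} m(s⋆) m(s⋆⋆) (a(x(s⋆⋆) − x(σ)) + a(x(s⋆⋆) − x(s⋆))) s(x(σ) − x(s⋆)) ds⋆ ds⋆⋆. Suppose m₁, m₂ : [0,1] → ℝ are nonnegative with ∫₀¹ m₁ = ∫₀¹ m₂ = 1, and x : [0,1] → ℝ is measurable with sup|x| ≤ X̄. Then ∫₀¹ |Ψ(σ, x, m₁) − Ψ(σ, x, m₂)| dσ ≤ 12 L S_∞ X̄ ‖m₁ − m₂‖_{L¹([0,1])}. -/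
open MeasureTheory

theorem Psi_L1_stability_in_m (L Sinf Xb : ℝ) (hL : 0 ≤ L) (hS : 0 ≤ Sinf)
    (hX : 0 ≤ Xb)
    (a : ℝ → ℝ) (ha : LipschitzWith (Real.toNNReal L) a) (ha0 : a 0 = 0)
    (s : ℝ → ℝ) (hs_meas : Measurable s) (hs_odd : ∀ y, s (-y) = -s y)
    (hs_bdd : ∀ y, |s y| ≤ Sinf)
    (x : ℝ → ℝ) (hx_meas : Measurable x)
    (hx_bdd : ∀ σ ∈ Set.Icc (0:ℝ) 1, |x σ| ≤ Xb)
    (m₁ m₂ : ℝ → ℝ)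
    (hm₁ : IntegrableOn m₁ (Set.Icc 0 1)) (hm₂ : IntegrableOn m₂ (Set.Icc 0 1))
    (hm₁n : ∀ σ ∈ Set.Icc (0:ℝ) 1, 0 ≤ m₁ σ)
    (hm₂n : ∀ σ ∈ Set.Icc (0:ℝ) 1, 0 ≤ m₂ σ)
    (hm₁m : ∫ σ in Set.Icc (0:ℝ) 1, m₁ σ = 1)
    (hm₂m : ∫ σ in Set.Icc (0:ℝ) 1, m₂ σ = 1)
    (Ψ : (ℝ → ℝ) → (ℝ → ℝ) → ℝ → ℝ)
    (hΨ : ∀ X m σ, Ψ X m σ = m σ * ∫ sa in Set.Icc (0:ℝ) 1,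
      ∫ sb in Set.Icc (0:ℝ) 1,
        m sa * m sb * ((a (X sb - X σ) + a (X sb - X sa)) * s (X σ - X sa))) :
    ∫ σ in Set.Icc (0:ℝ) 1, |Ψ x m₁ σ - Ψ x m₂ σ|
      ≤ 12 * L * Sinf * Xb * ∫ σ in Set.Icc (0:ℝ) 1, |m₁ σ - m₂ σ| := by
  set μ := volume.restrict (Set.Icc (0:ℝ) 1) with hμ
  set δ := ∫ σ, |m₁ σ - m₂ σ| ∂μ with hδ
  set C := 4 * L * Sinf * Xb with hCdef
  have hC : 0 ≤ C := by positivity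
  have hm₁' : Integrable m₁ μ := hm₁
  have hm₂' : Integrable m₂ μ := hm₂
  have hΔint : Integrable (fun σ => |m₁ σ - m₂ σ|) μ := (hm₁'.sub hm₂').abs
  have hδ0 : 0 ≤ δ := integral_nonneg fun _ => abs_nonneg _
  -- pointwise bound on a
  have habs : ∀ y, |a y| ≤ L * |y| := by
    intro y
    have h := ha.dist_le_mul y 0
    rw [Real.dist_eq, Real.dist_eq, ha0, sub_zero, sub_zero] at h
    rwa [Real.coe_toNNReal L hL] at h
  set K : ℝ → ℝ → ℝ → ℝ :=
    fun σ sa sb => (a (x sb - x σ) + a (x sb - x sa)) * s (x σ - x sa) with hKdef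
  have hΨ' : ∀ m σ, Ψ x m σ = m σ * ∫ sa, ∫ sb, m sa * m sb * K σ sa sb ∂μ ∂μ :=
    fun m σ => hΨ x m σ
  -- kernel bound
  have hK : ∀ σ ∈ Set.Icc (0:ℝ) 1, ∀ sa ∈ Set.Icc (0:ℝ) 1, ∀ sb ∈ Set.Icc (0:ℝ) 1,
      |K σ sa sb| ≤ C := by
    intro σ hσ sa hsa sb hsb
    have h1 : |a (x sb - x σ) + a (x sb - x sa)| ≤ 4 * L * Xb := by
      have b1 := habs (x sb - x σ)
      have b2 := habs (x sb - x sa)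
      have c1 : |x sb - x σ| ≤ 2 * Xb := by
        calc |x sb - x σ| ≤ |x sb| + |x σ| := abs_sub _ _
          _ ≤ 2 * Xb := by linarith [hx_bdd sb hsb, hx_bdd σ hσ]
      have c2 : |x sb - x sa| ≤ 2 * Xb := by
        calc |x sb - x sa| ≤ |x sb| + |x sa| := abs_sub _ _
          _ ≤ 2 * Xb := by linarith [hx_bdd sb hsb, hx_bdd sa hsa]
      calc |a (x sb - x σ) + a (x sb - x sa)| ≤ |a (x sb - x σ)| + |a (x sb - x sa)| :=
            abs_add_le _ _
        _ ≤ L * (2 * Xb) + L * (2 * Xb) := by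
            refine add_le_add (b1.trans ?_) (b2.trans ?_) <;>
              exact mul_le_mul_of_nonneg_left (by assumption) hL
        _ = 4 * L * Xb := by ring
    calc |K σ sa sb| = |a (x sb - x σ) + a (x sb - x sa)| * |s (x σ - x sa)| := abs_mul _ _
      _ ≤ (4 * L * Xb) * Sinf :=
          mul_le_mul h1 (hs_bdd _) (abs_nonneg _) (by positivity)
      _ = C := by rw [hCdef]; ring
  -- measurability of the kernel
  have hKm : ∀ σ, Measurable (fun p : ℝ × ℝ => K σ p.1 p.2) := by
    intro σ
    exact ((ha.continuous.measurable.comp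
        ((hx_meas.comp measurable_snd).sub measurable_const)).add
      (ha.continuous.measurable.comp
        ((hx_meas.comp measurable_snd).sub (hx_meas.comp measurable_fst)))).mul
      (hs_meas.comp (measurable_const.sub (hx_meas.comp measurable_fst)))
  have hKb : ∀ σ sa, Measurable (fun sb => K σ sa sb) := fun σ sa =>
    (hKm σ).comp measurable_prodMk_left
  -- integrability of inner integrands
  have hint_mulK : ∀ (g : ℝ → ℝ), Integrable g μ → ∀ σ ∈ Set.Icc (0:ℝ) 1,
      ∀ sa ∈ Set.Icc (0:ℝ) 1, Integrable (fun sb => g sb * K σ sa sb) μ := by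
    intro g hg σ hσ sa hsa
    refine Integrable.mono' (hg.abs.mul_const C)
      (hg.aestronglyMeasurable.mul (hKb σ sa).aestronglyMeasurable) ?_
    filter_upwards [ae_restrict_mem measurableSet_Icc] with sb hsb
    rw [Real.norm_eq_abs, abs_mul]
    exact mul_le_mul_of_nonneg_left (hK σ hσ sa hsa sb hsb) (abs_nonneg _)
  -- integrability of sa ↦ inner integral
  have hJint : ∀ (m : ℝ → ℝ), Integrable m μ → ∀ σ ∈ Set.Icc (0:ℝ) 1,
      Integrable (fun sa => ∫ sb, m sa * m sb * K σ sa sb ∂μ) μ := by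
    intro m hm σ hσ
    have hF : Integrable (fun p : ℝ × ℝ => m p.1 * m p.2 * K σ p.1 p.2) (μ.prod μ) := by
      refine Integrable.mono' ((hm.abs.mul_prod hm.abs).mul_const C)
        ((hm.aestronglyMeasurable.comp_fst.mul hm.aestronglyMeasurable.comp_snd).mul
          (hKm σ).aestronglyMeasurable) ?_
      have hmem : ∀ᵐ p ∂(μ.prod μ), p ∈ (Set.Icc (0:ℝ) 1) ×ˢ (Set.Icc (0:ℝ) 1) := by
        rw [hμ, Measure.prod_restrict]
        exact ae_restrict_mem (measurableSet_Icc.prod measurableSet_Icc)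
      filter_upwards [hmem] with p hp
      rw [Real.norm_eq_abs, abs_mul, abs_mul]
      exact mul_le_mul_of_nonneg_left (hK σ hσ p.1 hp.1 p.2 hp.2)
        (mul_nonneg (abs_nonneg _) (abs_nonneg _))
    exact hF.integral_prod_left
  -- a.e. nonnegativity
  have hm₁ae : ∀ᵐ σ ∂μ, σ ∈ Set.Icc (0:ℝ) 1 := ae_restrict_mem measurableSet_Icc
  -- Step A: bound on the double integral
  have hIbdd : ∀ (m : ℝ → ℝ), Integrable m μ → (∀ σ ∈ Set.Icc (0:ℝ) 1, 0 ≤ m σ) →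
      (∫ σ, m σ ∂μ) = 1 → ∀ σ ∈ Set.Icc (0:ℝ) 1,
      |∫ sa, ∫ sb, m sa * m sb * K σ sa sb ∂μ ∂μ| ≤ C := by
    intro m hm hmn hmm σ hσ
    rw [← Real.norm_eq_abs]
    calc ‖∫ sa, ∫ sb, m sa * m sb * K σ sa sb ∂μ ∂μ‖
        ≤ ∫ sa, C * m sa ∂μ := by
          refine norm_integral_le_of_norm_le (hm.const_mul C) ?_
          filter_upwards [hm₁ae] with sa hsa
          rw [Real.norm_eq_abs, ← Real.norm_eq_abs]
          calc ‖∫ sb, m sa * m sb * K σ sa sb ∂μ‖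
              ≤ ∫ sb, C * m sa * m sb ∂μ := by
                refine norm_integral_le_of_norm_le (hm.const_mul (C * m sa)) ?_
                filter_upwards [hm₁ae] with sb hsb
                rw [Real.norm_eq_abs]
                calc |m sa * m sb * K σ sa sb|
                    = m sa * m sb * |K σ sa sb| := by
                      rw [abs_mul, abs_mul, abs_of_nonneg (hmn sa hsa),
                        abs_of_nonneg (hmn sb hsb)]
                  _ ≤ m sa * m sb * C := mul_le_mul_of_nonneg_left
                      (hK σ hσ sa hsa sb hsb) (mul_nonneg (hmn sa hsa) (hmn sb hsb))
                  _ = C * m sa * m sb := by ring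
            _ = C * m sa := by rw [integral_const_mul, hmm, mul_one]
      _ = C := by rw [integral_const_mul, hmm, mul_one]
  -- Step B: stability of the double integral
  have hIdiff : ∀ σ ∈ Set.Icc (0:ℝ) 1,
      |(∫ sa, ∫ sb, m₁ sa * m₁ sb * K σ sa sb ∂μ ∂μ)
        - (∫ sa, ∫ sb, m₂ sa * m₂ sb * K σ sa sb ∂μ ∂μ)| ≤ 2 * C * δ := by
    intro σ hσ
    rw [← integral_sub (hJint m₁ hm₁' σ hσ) (hJint m₂ hm₂' σ hσ), ← Real.norm_eq_abs]
    calc ‖∫ sa, ((∫ sb, m₁ sa * m₁ sb * K σ sa sb ∂μ)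
            - ∫ sb, m₂ sa * m₂ sb * K σ sa sb ∂μ) ∂μ‖
        ≤ ∫ sa, (C * |m₁ sa - m₂ sa| + (C * δ) * m₂ sa) ∂μ := by
          refine norm_integral_le_of_norm_le
            ((hΔint.const_mul C).add (hm₂'.const_mul (C * δ))) ?_
          filter_upwards [hm₁ae] with sa hsa
          have e1 : Integrable (fun sb => m₁ sa * m₁ sb * K σ sa sb) μ :=
            hint_mulK (fun sb => m₁ sa * m₁ sb) (hm₁'.const_mul _) σ hσ sa hsa
          have e2 : Integrable (fun sb => m₂ sa * m₂ sb * K σ sa sb) μ :=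
            hint_mulK (fun sb => m₂ sa * m₂ sb) (hm₂'.const_mul _) σ hσ sa hsa
          rw [← integral_sub e1 e2]
          have hcongr : (∫ sb, (m₁ sa * m₁ sb * K σ sa sb
              - m₂ sa * m₂ sb * K σ sa sb) ∂μ)
              = ∫ sb, (((m₁ sa - m₂ sa) * m₁ sb) * K σ sa sb
                + (m₂ sa * (m₁ sb - m₂ sb)) * K σ sa sb) ∂μ :=
            integral_congr_ae (ae_of_all _ fun sb => by ring)
          rw [hcongr, Real.norm_eq_abs, ← Real.norm_eq_abs]
          calc ‖∫ sb, (((m₁ sa - m₂ sa) * m₁ sb) * K σ sa sb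
                + (m₂ sa * (m₁ sb - m₂ sb)) * K σ sa sb) ∂μ‖
              ≤ ∫ sb, ((C * |m₁ sa - m₂ sa|) * m₁ sb
                  + (C * m₂ sa) * |m₁ sb - m₂ sb|) ∂μ := by
                refine norm_integral_le_of_norm_le
                  ((hm₁'.const_mul _).add (hΔint.const_mul _)) ?_
                filter_upwards [hm₁ae] with sb hsb
                rw [Real.norm_eq_abs]
                have hb1 : |((m₁ sa - m₂ sa) * m₁ sb) * K σ sa sb|
                    ≤ (C * |m₁ sa - m₂ sa|) * m₁ sb := by
                  rw [abs_mul, abs_mul, abs_of_nonneg (hm₁n sb hsb)]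
                  calc |m₁ sa - m₂ sa| * m₁ sb * |K σ sa sb|
                      ≤ |m₁ sa - m₂ sa| * m₁ sb * C := mul_le_mul_of_nonneg_left
                        (hK σ hσ sa hsa sb hsb)
                        (mul_nonneg (abs_nonneg _) (hm₁n sb hsb))
                    _ = (C * |m₁ sa - m₂ sa|) * m₁ sb := by ring
                have hb2 : |(m₂ sa * (m₁ sb - m₂ sb)) * K σ sa sb|
                    ≤ (C * m₂ sa) * |m₁ sb - m₂ sb| := by
                  rw [abs_mul, abs_mul, abs_of_nonneg (hm₂n sa hsa)]
                  calc m₂ sa * |m₁ sb - m₂ sb| * |K σ sa sb|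
                      ≤ m₂ sa * |m₁ sb - m₂ sb| * C := mul_le_mul_of_nonneg_left
                        (hK σ hσ sa hsa sb hsb)
                        (mul_nonneg (hm₂n sa hsa) (abs_nonneg _))
                    _ = (C * m₂ sa) * |m₁ sb - m₂ sb| := by ring
                exact (abs_add_le _ _).trans (add_le_add hb1 hb2)
            _ = C * |m₁ sa - m₂ sa| + (C * δ) * m₂ sa := by
                rw [integral_add (hm₁'.const_mul _) (hΔint.const_mul _),
                  integral_const_mul, integral_const_mul, hm₁m, ← hδ]
                ring
      _ = C * δ + (C * δ) * 1 := by
          rw [integral_add (hΔint.const_mul C) (hm₂'.const_mul (C * δ)),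
            integral_const_mul, integral_const_mul, hm₂m, ← hδ]
      _ = 2 * C * δ := by ring
  -- pointwise bound on Ψ difference
  have key : ∀ σ ∈ Set.Icc (0:ℝ) 1,
      |Ψ x m₁ σ - Ψ x m₂ σ| ≤ C * |m₁ σ - m₂ σ| + (2 * C * δ) * m₂ σ := by
    intro σ hσ
    have hA1 := hIbdd m₁ hm₁' hm₁n hm₁m σ hσ
    have hAd := hIdiff σ hσ
    set A₁ := ∫ sa, ∫ sb, m₁ sa * m₁ sb * K σ sa sb ∂μ ∂μ with hA₁def
    set A₂ := ∫ sa, ∫ sb, m₂ sa * m₂ sb * K σ sa sb ∂μ ∂μ with hA₂def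
    rw [hΨ' m₁ σ, hΨ' m₂ σ]
    calc |m₁ σ * A₁ - m₂ σ * A₂|
        = |(m₁ σ - m₂ σ) * A₁ + m₂ σ * (A₁ - A₂)| := by rw [show m₁ σ * A₁ - m₂ σ * A₂
            = (m₁ σ - m₂ σ) * A₁ + m₂ σ * (A₁ - A₂) by ring]
      _ ≤ |(m₁ σ - m₂ σ) * A₁| + |m₂ σ * (A₁ - A₂)| := abs_add_le _ _
      _ = |m₁ σ - m₂ σ| * |A₁| + m₂ σ * |A₁ - A₂| := by
          rw [abs_mul, abs_mul, abs_of_nonneg (hm₂n σ hσ)]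
      _ ≤ |m₁ σ - m₂ σ| * C + m₂ σ * (2 * C * δ) :=
          add_le_add (mul_le_mul_of_nonneg_left hA1 (abs_nonneg _))
            (mul_le_mul_of_nonneg_left hAd (hm₂n σ hσ))
      _ = C * |m₁ σ - m₂ σ| + (2 * C * δ) * m₂ σ := by ring
  -- conclude
  have hgint : Integrable (fun σ => C * |m₁ σ - m₂ σ| + (2 * C * δ) * m₂ σ) μ :=
    (hΔint.const_mul C).add (hm₂'.const_mul _)
  calc ∫ σ, |Ψ x m₁ σ - Ψ x m₂ σ| ∂μ
      ≤ ∫ σ, (C * |m₁ σ - m₂ σ| + (2 * C * δ) * m₂ σ) ∂μ := by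
        refine integral_mono_of_nonneg (ae_of_all _ fun σ => abs_nonneg _) hgint ?_
        filter_upwards [hm₁ae] with σ hσ using key σ hσ
    _ = C * δ + (2 * C * δ) * 1 := by
        rw [integral_add (hΔint.const_mul C) (hm₂'.const_mul _),
          integral_const_mul, integral_const_mul, hm₂m, ← hδ]
    _ = 12 * L * Sinf * Xb * δ := by rw [hCdef]; ring
end

section
/- Let a : ℝ → ℝ be L-Lipschitz with a(0)=0, and s : ℝ → ℝ odd, bounded by S_∞, with restrictions to (0,∞) and (−∞,0) both S-Lipschitz. Define Ψ as in the pairwise competition model. Suppose m : [0,1] → ℝ is nonnegative with ∫₀¹ m = 1 and ‖m‖_∞ ≤ M̄, and x₁, x₂ : [0,1] → ℝ are continuous strictly increasing functions bounded by X̄. Then ∫₀¹ |Ψ(σ, x₁, m) − Ψ(σ, x₂, m)| dσ ≤ L(3M̄S_∞ + S_∞ + 16SX̄) · sup_{[0,1]} |x₁ − x₂|. -/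
open MeasureTheory

/-- Workhorse: a weighted integral against a probability density `m` is bounded by any
pointwise bound of the integrand, with no measurability assumption on `f`. -/
lemma psi_aux_bound (m f : ℝ → ℝ) (hm : IntegrableOn m (Set.Icc 0 1))
    (hmn : ∀ t ∈ Set.Icc (0:ℝ) 1, 0 ≤ m t)
    (hmm : ∫ t in Set.Icc (0:ℝ) 1, m t = 1)
    {B : ℝ} (hB : ∀ t ∈ Set.Icc (0:ℝ) 1, |f t| ≤ B) :
    |∫ t in Set.Icc (0:ℝ) 1, m t * f t| ≤ B := by
  rw [← Real.norm_eq_abs]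
  calc ‖∫ t in Set.Icc (0:ℝ) 1, m t * f t‖
      ≤ ∫ t in Set.Icc (0:ℝ) 1, ‖m t * f t‖ := norm_integral_le_integral_norm _
    _ ≤ ∫ t in Set.Icc (0:ℝ) 1, m t * B := by
        apply integral_mono_of_nonneg
        · exact Filter.Eventually.of_forall fun t => norm_nonneg _
        · exact hm.mul_const B
        · filter_upwards [ae_restrict_mem measurableSet_Icc] with t ht
          have hmt := hmn t ht
          rw [norm_mul, Real.norm_eq_abs, Real.norm_eq_abs, abs_of_nonneg hmt]
          exact mul_le_mul_of_nonneg_left (hB t ht) hmt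
    _ = B := by rw [integral_mul_const, hmm, one_mul]

/-- Integrability of `m` times a function continuous on `[0,1]`. -/
lemma psi_aux_intmul (m F : ℝ → ℝ) (hm : IntegrableOn m (Set.Icc 0 1))
    (hF : ContinuousOn F (Set.Icc 0 1)) :
    IntegrableOn (fun t => m t * F t) (Set.Icc 0 1) := by
  obtain ⟨C, hC⟩ := isCompact_Icc.exists_bound_of_continuousOn hF
  have h : IntegrableOn (fun t => F t * m t) (Set.Icc 0 1) :=
    hm.bdd_mul (hF.aestronglyMeasurable measurableSet_Icc)
      (by filter_upwards [ae_restrict_mem measurableSet_Icc] with t ht using hC t ht)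
  exact h.congr (Filter.Eventually.of_forall fun t => mul_comm _ _)

lemma psi_aux_int2 (m a x : ℝ → ℝ) (hm : IntegrableOn m (Set.Icc 0 1)) (hac : Continuous a)
    (hxc : ContinuousOn x (Set.Icc 0 1)) (c d : ℝ) :
    IntegrableOn (fun t => m t * (a (x t - c) + a (x t - d))) (Set.Icc 0 1) :=
  psi_aux_intmul m _ hm ((hac.comp_continuousOn (hxc.sub continuousOn_const)).add
    (hac.comp_continuousOn (hxc.sub continuousOn_const)))

/-- Continuity in `sa` of the inner integral. -/
lemma psi_aux_A_cont (m a x : ℝ → ℝ) (L c : ℝ) (hL : 0 ≤ L)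
    (hm : IntegrableOn m (Set.Icc 0 1))
    (hmn : ∀ t ∈ Set.Icc (0:ℝ) 1, 0 ≤ m t)
    (hmm : ∫ t in Set.Icc (0:ℝ) 1, m t = 1)
    (hac : Continuous a)
    (halip : ∀ u v : ℝ, |a u - a v| ≤ L * |u - v|)
    (hxc : ContinuousOn x (Set.Icc 0 1)) :
    ContinuousOn (fun sa => ∫ sb in Set.Icc (0:ℝ) 1,
      m sb * (a (x sb - c) + a (x sb - x sa))) (Set.Icc 0 1) := by
  have hH : LipschitzWith (Real.toNNReal L)
      (fun t : ℝ => ∫ sb in Set.Icc (0:ℝ) 1, m sb * (a (x sb - c) + a (x sb - t))) := by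
    rw [lipschitzWith_iff_dist_le_mul]
    intro t t'
    rw [Real.dist_eq, Real.dist_eq, Real.coe_toNNReal _ hL]
    have e1 : (∫ sb in Set.Icc (0:ℝ) 1,
          m sb * ((a (x sb - c) + a (x sb - t)) - (a (x sb - c) + a (x sb - t')))) =
        (∫ sb in Set.Icc (0:ℝ) 1, m sb * (a (x sb - c) + a (x sb - t))) -
          ∫ sb in Set.Icc (0:ℝ) 1, m sb * (a (x sb - c) + a (x sb - t')) := by
      rw [← integral_sub (psi_aux_int2 m a x hm hac hxc c t) (psi_aux_int2 m a x hm hac hxc c t')]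
      apply integral_congr_ae
      apply Filter.Eventually.of_forall
      intro sb
      dsimp only
      ring
    rw [← e1]
    apply psi_aux_bound m _ hm hmn hmm
    intro sb _
    have h := halip (x sb - t) (x sb - t')
    have e2 : (x sb - t) - (x sb - t') = t' - t := by ring
    rw [e2, abs_sub_comm t' t] at h
    calc |(a (x sb - c) + a (x sb - t)) - (a (x sb - c) + a (x sb - t'))|
        = |a (x sb - t) - a (x sb - t')| := congrArg abs (by ring)
      _ ≤ L * |t - t'| := h
  have := hH.continuous.comp_continuousOn hxc
  exact this

theorem Psi_stability_in_x (L Sinf S Mb Xb : ℝ) (hL : 0 ≤ L) (hSinf : 0 ≤ Sinf)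
    (hS : 0 ≤ S) (hMb : 0 ≤ Mb) (hXb : 0 ≤ Xb)
    (a : ℝ → ℝ) (ha : LipschitzWith (Real.toNNReal L) a) (ha0 : a 0 = 0)
    (sgn : ℝ → ℝ) (hs_odd : ∀ y, sgn (-y) = -sgn y)
    (hs_bdd : ∀ y, |sgn y| ≤ Sinf)
    (hs_lip_pos : ∀ y₁ ∈ Set.Ioi (0:ℝ), ∀ y₂ ∈ Set.Ioi (0:ℝ),
      |sgn y₁ - sgn y₂| ≤ S * |y₁ - y₂|)
    (hs_lip_neg : ∀ y₁ ∈ Set.Iio (0:ℝ), ∀ y₂ ∈ Set.Iio (0:ℝ),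
      |sgn y₁ - sgn y₂| ≤ S * |y₁ - y₂|)
    (m : ℝ → ℝ) (hm : IntegrableOn m (Set.Icc 0 1))
    (hmn : ∀ σ ∈ Set.Icc (0:ℝ) 1, 0 ≤ m σ)
    (hmm : ∫ σ in Set.Icc (0:ℝ) 1, m σ = 1)
    (hmb : ∀ σ ∈ Set.Icc (0:ℝ) 1, m σ ≤ Mb)
    (x₁ x₂ : ℝ → ℝ)
    (hx₁c : ContinuousOn x₁ (Set.Icc 0 1)) (hx₂c : ContinuousOn x₂ (Set.Icc 0 1))
    (hx₁mono : StrictMonoOn x₁ (Set.Icc 0 1)) (hx₂mono : StrictMonoOn x₂ (Set.Icc 0 1))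
    (hx₁b : ∀ σ ∈ Set.Icc (0:ℝ) 1, |x₁ σ| ≤ Xb)
    (hx₂b : ∀ σ ∈ Set.Icc (0:ℝ) 1, |x₂ σ| ≤ Xb)
    (Ψ : (ℝ → ℝ) → (ℝ → ℝ) → ℝ → ℝ)
    (hΨ : ∀ X M σ, Ψ X M σ = M σ * ∫ sa in Set.Icc (0:ℝ) 1,
      ∫ sb in Set.Icc (0:ℝ) 1,
        M sa * M sb * ((a (X sb - X σ) + a (X sb - X sa)) * sgn (X σ - X sa))) :
    ∫ σ in Set.Icc (0:ℝ) 1, |Ψ x₁ m σ - Ψ x₂ m σ|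
      ≤ L * (3 * Mb * Sinf + Sinf + 16 * S * Xb) *
        (⨆ σ : Set.Icc (0:ℝ) 1, |x₁ σ - x₂ σ|) := by
  have hI : MeasurableSet (Set.Icc (0:ℝ) 1) := measurableSet_Icc
  have h01 : (0:ℝ) ∈ Set.Icc (0:ℝ) 1 := ⟨le_refl 0, zero_le_one⟩
  have hac : Continuous a := ha.continuous
  have halip : ∀ u v : ℝ, |a u - a v| ≤ L * |u - v| := by
    intro u v
    have h := ha.dist_le_mul u v
    rw [Real.dist_eq, Real.dist_eq, Real.coe_toNNReal _ hL] at h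
    exact h
  have habd : ∀ u : ℝ, |a u| ≤ L * |u| := by
    intro u
    have h := halip u 0
    simpa [ha0] using h
  have hs0 : sgn 0 = 0 := by
    have h := hs_odd 0
    rw [neg_zero] at h
    linarith
  -- measurability of sgn
  have hsgn_pos : ContinuousOn sgn (Set.Ioi (0:ℝ)) := by
    have : LipschitzOnWith (Real.toNNReal S) sgn (Set.Ioi (0:ℝ)) := by
      rw [lipschitzOnWith_iff_dist_le_mul]
      intro y hy z hz
      rw [Real.dist_eq, Real.dist_eq, Real.coe_toNNReal _ hS]
      exact hs_lip_pos y hy z hz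
    exact this.continuousOn
  have hsgn_neg : ContinuousOn sgn (Set.Iio (0:ℝ)) := by
    have : LipschitzOnWith (Real.toNNReal S) sgn (Set.Iio (0:ℝ)) := by
      rw [lipschitzOnWith_iff_dist_le_mul]
      intro y hy z hz
      rw [Real.dist_eq, Real.dist_eq, Real.coe_toNNReal _ hS]
      exact hs_lip_neg y hy z hz
    exact this.continuousOn
  have hsgnm : Measurable sgn := by
    apply measurable_of_continuousOn_compl_singleton (0:ℝ)
    intro y hy
    have hy' : y ≠ 0 := hy
    rcases hy'.lt_or_gt with h | h
    · exact (hsgn_neg.continuousAt (Iio_mem_nhds h)).continuousWithinAt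
    · exact (hsgn_pos.continuousAt (Ioi_mem_nhds h)).continuousWithinAt
  -- the sup
  have hbdd : BddAbove (Set.range fun σ : Set.Icc (0:ℝ) 1 => |x₁ σ - x₂ σ|) := by
    have hcont : ContinuousOn (fun t => |x₁ t - x₂ t|) (Set.Icc (0:ℝ) 1) := (hx₁c.sub hx₂c).abs
    have h := (isCompact_Icc.image_of_continuousOn hcont).bddAbove
    rwa [Set.image_eq_range] at h
  set T := ⨆ σ : Set.Icc (0:ℝ) 1, |x₁ σ - x₂ σ| with hTdef
  have hTle : ∀ t ∈ Set.Icc (0:ℝ) 1, |x₁ t - x₂ t| ≤ T := fun t ht => le_ciSup hbdd ⟨t, ht⟩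
  have hT0 : 0 ≤ T := le_trans (abs_nonneg _) (hTle 0 h01)
  -- Mb ≥ 1
  have hMb1 : (1:ℝ) ≤ Mb := by
    have h : ∫ t in Set.Icc (0:ℝ) 1, m t ≤ ∫ _t in Set.Icc (0:ℝ) 1, Mb :=
      setIntegral_mono_on hm (integrableOn_const measure_Icc_lt_top.ne)
        measurableSet_Icc hmb
    rw [hmm, setIntegral_const] at h
    simpa [Real.volume_Icc] using h
  -- the key pointwise estimate
  have key : ∀ σ ∈ Set.Icc (0:ℝ) 1,
      |Ψ x₁ m σ - Ψ x₂ m σ| ≤ m σ * (L * (4 * Sinf + 8 * S * Xb) * T) := by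
    intro σ hσ
    -- package of facts for a single x
    have pkg : ∀ x : ℝ → ℝ, ContinuousOn x (Set.Icc 0 1) →
        (∀ t ∈ Set.Icc (0:ℝ) 1, |x t| ≤ Xb) →
        ((∫ sa in Set.Icc (0:ℝ) 1, ∫ sb in Set.Icc (0:ℝ) 1,
            m sa * m sb * ((a (x sb - x σ) + a (x sb - x sa)) * sgn (x σ - x sa)))
          = ∫ sa in Set.Icc (0:ℝ) 1, m sa * (sgn (x σ - x sa) *
              ∫ sb in Set.Icc (0:ℝ) 1, m sb * (a (x sb - x σ) + a (x sb - x sa))))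
        ∧ IntegrableOn (fun sa => m sa * (sgn (x σ - x sa) *
              ∫ sb in Set.Icc (0:ℝ) 1, m sb * (a (x sb - x σ) + a (x sb - x sa)))) (Set.Icc 0 1)
        ∧ ∀ sa ∈ Set.Icc (0:ℝ) 1,
            |∫ sb in Set.Icc (0:ℝ) 1, m sb * (a (x sb - x σ) + a (x sb - x sa))|
              ≤ 4 * (L * Xb) := by
      intro x hxc hxb
      have hAb : ∀ sa ∈ Set.Icc (0:ℝ) 1,
          |∫ sb in Set.Icc (0:ℝ) 1, m sb * (a (x sb - x σ) + a (x sb - x sa))|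
            ≤ 4 * (L * Xb) := by
        intro sa hsa
        apply psi_aux_bound m _ hm hmn hmm
        intro sb hsb
        have h1 := hxb sb hsb
        have h2 := hxb σ hσ
        have h3 := hxb sa hsa
        have b1 : |a (x sb - x σ)| ≤ L * (2 * Xb) := by
          refine (habd _).trans (mul_le_mul_of_nonneg_left ?_ hL)
          calc |x sb - x σ| ≤ |x sb| + |x σ| := abs_sub _ _
            _ ≤ 2 * Xb := by linarith
        have b2 : |a (x sb - x sa)| ≤ L * (2 * Xb) := by
          refine (habd _).trans (mul_le_mul_of_nonneg_left ?_ hL)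
          calc |x sb - x sa| ≤ |x sb| + |x sa| := abs_sub _ _
            _ ≤ 2 * Xb := by linarith
        calc |a (x sb - x σ) + a (x sb - x sa)|
            ≤ |a (x sb - x σ)| + |a (x sb - x sa)| := abs_add_le _ _
          _ ≤ 4 * (L * Xb) := by linarith
      refine ⟨?_, ?_, hAb⟩
      · apply integral_congr_ae
        apply Filter.Eventually.of_forall
        intro sa
        have h : ∀ sb : ℝ, m sa * m sb * ((a (x sb - x σ) + a (x sb - x sa)) * sgn (x σ - x sa))
            = (m sa * sgn (x σ - x sa)) * (m sb * (a (x sb - x σ) + a (x sb - x sa))) :=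
          fun sb => by ring
        simp only [h]
        rw [integral_const_mul, mul_assoc]
      · have hAc : ContinuousOn (fun sa => ∫ sb in Set.Icc (0:ℝ) 1,
            m sb * (a (x sb - x σ) + a (x sb - x sa))) (Set.Icc 0 1) :=
          psi_aux_A_cont m a x L (x σ) hL hm hmn hmm hac halip hxc
        have hsgnA : AEStronglyMeasurable (fun sa => sgn (x σ - x sa) *
            ∫ sb in Set.Icc (0:ℝ) 1, m sb * (a (x sb - x σ) + a (x sb - x sa)))
            (volume.restrict (Set.Icc 0 1)) := by
          apply AEStronglyMeasurable.mul
          · have hxa : AEMeasurable (fun sa => x σ - x sa) (volume.restrict (Set.Icc 0 1)) :=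
              (continuousOn_const.sub hxc).aemeasurable hI
            exact (hsgnm.comp_aemeasurable hxa).aestronglyMeasurable
          · exact hAc.aestronglyMeasurable hI
        have hbound : ∀ᵐ sa ∂(volume.restrict (Set.Icc (0:ℝ) 1)),
            ‖sgn (x σ - x sa) *
              ∫ sb in Set.Icc (0:ℝ) 1, m sb * (a (x sb - x σ) + a (x sb - x sa))‖
              ≤ Sinf * (4 * (L * Xb)) := by
          filter_upwards [ae_restrict_mem hI] with sa hsa
          rw [Real.norm_eq_abs, abs_mul]
          exact mul_le_mul (hs_bdd _) (hAb sa hsa) (abs_nonneg _) hSinf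
        have h := hm.bdd_mul hsgnA hbound
        exact h.congr (Filter.Eventually.of_forall fun sa => mul_comm _ _)
    obtain ⟨hre₁, hint₁, hAb₁⟩ := pkg x₁ hx₁c hx₁b
    obtain ⟨hre₂, hint₂, hAb₂⟩ := pkg x₂ hx₂c hx₂b
    rw [hΨ x₁ m σ, hΨ x₂ m σ, hre₁, hre₂, ← mul_sub, abs_mul, abs_of_nonneg (hmn σ hσ)]
    refine mul_le_mul_of_nonneg_left ?_ (hmn σ hσ)
    -- pointwise comparison of the two integrands
    have hq : ∀ sa ∈ Set.Icc (0:ℝ) 1,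
        |(sgn (x₁ σ - x₁ sa) *
            ∫ sb in Set.Icc (0:ℝ) 1, m sb * (a (x₁ sb - x₁ σ) + a (x₁ sb - x₁ sa))) -
          (sgn (x₂ σ - x₂ sa) *
            ∫ sb in Set.Icc (0:ℝ) 1, m sb * (a (x₂ sb - x₂ σ) + a (x₂ sb - x₂ sa)))|
          ≤ L * (4 * Sinf + 8 * S * Xb) * T := by
      intro sa hsa
      -- difference of the A-integrals
      have hd : |(∫ sb in Set.Icc (0:ℝ) 1, m sb * (a (x₁ sb - x₁ σ) + a (x₁ sb - x₁ sa))) -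
          ∫ sb in Set.Icc (0:ℝ) 1, m sb * (a (x₂ sb - x₂ σ) + a (x₂ sb - x₂ sa))|
          ≤ 4 * (L * T) := by
        have e1 : (∫ sb in Set.Icc (0:ℝ) 1,
              m sb * ((a (x₁ sb - x₁ σ) + a (x₁ sb - x₁ sa)) -
                (a (x₂ sb - x₂ σ) + a (x₂ sb - x₂ sa)))) =
            (∫ sb in Set.Icc (0:ℝ) 1, m sb * (a (x₁ sb - x₁ σ) + a (x₁ sb - x₁ sa))) -
              ∫ sb in Set.Icc (0:ℝ) 1, m sb * (a (x₂ sb - x₂ σ) + a (x₂ sb - x₂ sa)) := by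
          rw [← integral_sub (psi_aux_int2 m a x₁ hm hac hx₁c (x₁ σ) (x₁ sa))
            (psi_aux_int2 m a x₂ hm hac hx₂c (x₂ σ) (x₂ sa))]
          apply integral_congr_ae
          apply Filter.Eventually.of_forall
          intro sb
          dsimp only
          ring
        rw [← e1]
        apply psi_aux_bound m _ hm hmn hmm
        intro sb hsb
        have p1 : |a (x₁ sb - x₁ σ) - a (x₂ sb - x₂ σ)| ≤ L * (2 * T) := by
          have h := halip (x₁ sb - x₁ σ) (x₂ sb - x₂ σ)
          have e : (x₁ sb - x₁ σ) - (x₂ sb - x₂ σ) = (x₁ sb - x₂ sb) - (x₁ σ - x₂ σ) := by ring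
          rw [e] at h
          refine h.trans (mul_le_mul_of_nonneg_left ?_ hL)
          refine (abs_sub _ _).trans ?_
          have h1 := hTle sb hsb
          have h2 := hTle σ hσ
          linarith
        have p2 : |a (x₁ sb - x₁ sa) - a (x₂ sb - x₂ sa)| ≤ L * (2 * T) := by
          have h := halip (x₁ sb - x₁ sa) (x₂ sb - x₂ sa)
          have e : (x₁ sb - x₁ sa) - (x₂ sb - x₂ sa) = (x₁ sb - x₂ sb) - (x₁ sa - x₂ sa) := by
            ring
          rw [e] at h
          refine h.trans (mul_le_mul_of_nonneg_left ?_ hL)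
          refine (abs_sub _ _).trans ?_
          have h1 := hTle sb hsb
          have h2 := hTle sa hsa
          linarith
        calc |(a (x₁ sb - x₁ σ) + a (x₁ sb - x₁ sa)) -
              (a (x₂ sb - x₂ σ) + a (x₂ sb - x₂ sa))|
            = |(a (x₁ sb - x₁ σ) - a (x₂ sb - x₂ σ)) +
                (a (x₁ sb - x₁ sa) - a (x₂ sb - x₂ sa))| := congrArg abs (by ring)
          _ ≤ |a (x₁ sb - x₁ σ) - a (x₂ sb - x₂ σ)| +
                |a (x₁ sb - x₁ sa) - a (x₂ sb - x₂ sa)| := abs_add_le _ _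
          _ ≤ 4 * (L * T) := by linarith
      -- difference of the sgn-factors
      have hsd : |sgn (x₁ σ - x₁ sa) - sgn (x₂ σ - x₂ sa)| ≤ 2 * (S * T) := by
        rcases lt_trichotomy sa σ with h | h | h
        · have h1 : (0:ℝ) < x₁ σ - x₁ sa := sub_pos.2 (hx₁mono hsa hσ h)
          have h2 : (0:ℝ) < x₂ σ - x₂ sa := sub_pos.2 (hx₂mono hsa hσ h)
          have hls := hs_lip_pos _ (Set.mem_Ioi.2 h1) _ (Set.mem_Ioi.2 h2)
          refine hls.trans ?_
          have e : (x₁ σ - x₁ sa) - (x₂ σ - x₂ sa) = (x₁ σ - x₂ σ) - (x₁ sa - x₂ sa) := by ring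
          rw [e]
          have hb : |(x₁ σ - x₂ σ) - (x₁ sa - x₂ sa)| ≤ 2 * T := by
            refine (abs_sub _ _).trans ?_
            have h1' := hTle σ hσ
            have h2' := hTle sa hsa
            linarith
          calc S * |(x₁ σ - x₂ σ) - (x₁ sa - x₂ sa)| ≤ S * (2 * T) :=
                mul_le_mul_of_nonneg_left hb hS
            _ = 2 * (S * T) := by ring
        · subst h
          simp only [sub_self, hs0]
          simp
          positivity
        · have h1 : x₁ σ - x₁ sa < 0 := sub_neg.2 (hx₁mono hσ hsa h)
          have h2 : x₂ σ - x₂ sa < 0 := sub_neg.2 (hx₂mono hσ hsa h)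
          have hls := hs_lip_neg _ (Set.mem_Iio.2 h1) _ (Set.mem_Iio.2 h2)
          refine hls.trans ?_
          have e : (x₁ σ - x₁ sa) - (x₂ σ - x₂ sa) = (x₁ σ - x₂ σ) - (x₁ sa - x₂ sa) := by ring
          rw [e]
          have hb : |(x₁ σ - x₂ σ) - (x₁ sa - x₂ sa)| ≤ 2 * T := by
            refine (abs_sub _ _).trans ?_
            have h1' := hTle σ hσ
            have h2' := hTle sa hsa
            linarith
          calc S * |(x₁ σ - x₂ σ) - (x₁ sa - x₂ sa)| ≤ S * (2 * T) :=
                mul_le_mul_of_nonneg_left hb hS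
            _ = 2 * (S * T) := by ring
      have hs₁ : |sgn (x₁ σ - x₁ sa)| ≤ Sinf := hs_bdd _
      have hA₂b := hAb₂ sa hsa
      have c1 : |sgn (x₁ σ - x₁ sa)| *
          |(∫ sb in Set.Icc (0:ℝ) 1, m sb * (a (x₁ sb - x₁ σ) + a (x₁ sb - x₁ sa))) -
            ∫ sb in Set.Icc (0:ℝ) 1, m sb * (a (x₂ sb - x₂ σ) + a (x₂ sb - x₂ sa))|
          ≤ Sinf * (4 * (L * T)) := mul_le_mul hs₁ hd (abs_nonneg _) hSinf
      have c2 : |sgn (x₁ σ - x₁ sa) - sgn (x₂ σ - x₂ sa)| *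
          |∫ sb in Set.Icc (0:ℝ) 1, m sb * (a (x₂ sb - x₂ σ) + a (x₂ sb - x₂ sa))|
          ≤ (2 * (S * T)) * (4 * (L * Xb)) :=
        mul_le_mul hsd hA₂b (abs_nonneg _) (by positivity)
      calc |(sgn (x₁ σ - x₁ sa) *
            ∫ sb in Set.Icc (0:ℝ) 1, m sb * (a (x₁ sb - x₁ σ) + a (x₁ sb - x₁ sa))) -
          (sgn (x₂ σ - x₂ sa) *
            ∫ sb in Set.Icc (0:ℝ) 1, m sb * (a (x₂ sb - x₂ σ) + a (x₂ sb - x₂ sa)))|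
          = |sgn (x₁ σ - x₁ sa) *
              ((∫ sb in Set.Icc (0:ℝ) 1, m sb * (a (x₁ sb - x₁ σ) + a (x₁ sb - x₁ sa))) -
                ∫ sb in Set.Icc (0:ℝ) 1, m sb * (a (x₂ sb - x₂ σ) + a (x₂ sb - x₂ sa))) +
              (sgn (x₁ σ - x₁ sa) - sgn (x₂ σ - x₂ sa)) *
                ∫ sb in Set.Icc (0:ℝ) 1, m sb * (a (x₂ sb - x₂ σ) + a (x₂ sb - x₂ sa))| :=
            congrArg abs (by ring)
        _ ≤ |sgn (x₁ σ - x₁ sa) *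
              ((∫ sb in Set.Icc (0:ℝ) 1, m sb * (a (x₁ sb - x₁ σ) + a (x₁ sb - x₁ sa))) -
                ∫ sb in Set.Icc (0:ℝ) 1, m sb * (a (x₂ sb - x₂ σ) + a (x₂ sb - x₂ sa)))| +
            |(sgn (x₁ σ - x₁ sa) - sgn (x₂ σ - x₂ sa)) *
                ∫ sb in Set.Icc (0:ℝ) 1, m sb * (a (x₂ sb - x₂ σ) + a (x₂ sb - x₂ sa))| :=
            abs_add_le _ _
        _ ≤ Sinf * (4 * (L * T)) + (2 * (S * T)) * (4 * (L * Xb)) := by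
            rw [abs_mul, abs_mul]
            exact add_le_add c1 c2
        _ = L * (4 * Sinf + 8 * S * Xb) * T := by ring
    have e1 : (∫ sa in Set.Icc (0:ℝ) 1, m sa *
          ((sgn (x₁ σ - x₁ sa) *
            ∫ sb in Set.Icc (0:ℝ) 1, m sb * (a (x₁ sb - x₁ σ) + a (x₁ sb - x₁ sa))) -
          (sgn (x₂ σ - x₂ sa) *
            ∫ sb in Set.Icc (0:ℝ) 1, m sb * (a (x₂ sb - x₂ σ) + a (x₂ sb - x₂ sa))))) =
        (∫ sa in Set.Icc (0:ℝ) 1, m sa * (sgn (x₁ σ - x₁ sa) *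
            ∫ sb in Set.Icc (0:ℝ) 1, m sb * (a (x₁ sb - x₁ σ) + a (x₁ sb - x₁ sa)))) -
          ∫ sa in Set.Icc (0:ℝ) 1, m sa * (sgn (x₂ σ - x₂ sa) *
            ∫ sb in Set.Icc (0:ℝ) 1, m sb * (a (x₂ sb - x₂ σ) + a (x₂ sb - x₂ sa))) := by
      rw [← integral_sub hint₁ hint₂]
      apply integral_congr_ae
      apply Filter.Eventually.of_forall
      intro sa
      dsimp only
      ring
    rw [← e1]
    exact psi_aux_bound m _ hm hmn hmm hq
  -- put everything together
  calc ∫ σ in Set.Icc (0:ℝ) 1, |Ψ x₁ m σ - Ψ x₂ m σ|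
      ≤ ∫ σ in Set.Icc (0:ℝ) 1, m σ * (L * (4 * Sinf + 8 * S * Xb) * T) := by
        apply integral_mono_of_nonneg
        · exact Filter.Eventually.of_forall fun σ => abs_nonneg _
        · exact hm.mul_const _
        · filter_upwards [ae_restrict_mem hI] with σ hσ
          exact key σ hσ
    _ = L * (4 * Sinf + 8 * S * Xb) * T := by rw [integral_mul_const, hmm, one_mul]
    _ ≤ L * (3 * Mb * Sinf + Sinf + 16 * S * Xb) * T := by
        have h1 : 0 ≤ 3 * Sinf * (Mb - 1) + 8 * (S * Xb) :=
          add_nonneg (mul_nonneg (by linarith) (by linarith))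
            (by positivity)
        have h2 : 0 ≤ L * T * (3 * Sinf * (Mb - 1) + 8 * (S * Xb)) :=
          mul_nonneg (mul_nonneg hL hT0) h1
        nlinarith [h2]
end

section
/- Let x₂ : [0,1]ᵈ → ℝᵈ be bi-Lipschitz with constant C (i.e., |s − s⋆|/C ≤ |x₂(s) − x₂(s⋆)| ≤ C|s − s⋆|), and let S : ℝᵈ → [0,∞) be locally integrable. Then there is a compact set K ⊂ ℝᵈ, depending only on C, d and sup|x₂|, such that for every s ∈ [0,1]ᵈ, ∫_{[0,1]ᵈ} S(x₂(s) − x₂(s⋆)) ds⋆ ≤ C' ∫_K S(y) dy, with C' depending only on C and d. -/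
open MeasureTheory

open scoped ENNReal NNReal

private lemma vol_image_le_aux {d : ℕ} (K : NNReal)
    (g : EuclideanSpace ℝ (Fin d) → EuclideanSpace ℝ (Fin d))
    (A : Set (EuclideanSpace ℝ (Fin d))) (h : LipschitzOnWith K g A) :
    volume (g '' A) ≤ (K : ℝ≥0∞) ^ d * volume A := by
  have hfin : ((d : ℕ) : ℝ)
      = ((Module.finrank ℝ (EuclideanSpace ℝ (Fin d)) : ℕ) : ℝ) := by
    rw [finrank_euclideanSpace_fin]
  haveI h1 : (μH[(d:ℝ)] : Measure (EuclideanSpace ℝ (Fin d))).IsAddHaarMeasure := by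
    rw [hfin]; infer_instance
  have h2 : (volume : Measure (EuclideanSpace ℝ (Fin d)))
      = Measure.addHaarScalarFactor (volume : Measure (EuclideanSpace ℝ (Fin d)))
          μH[(d:ℝ)] • μH[(d:ℝ)] :=
    Measure.isAddLeftInvariant_eq_smul _ _
  have h3 := h.hausdorffMeasure_image_le (d := (d:ℝ)) (Nat.cast_nonneg d)
  rw [ENNReal.rpow_natCast] at h3
  set c := Measure.addHaarScalarFactor (volume : Measure (EuclideanSpace ℝ (Fin d))) μH[(d:ℝ)]
  calc volume (g '' A) = c • μH[(d:ℝ)] (g '' A) := by rw [h2]; rfl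
    _ ≤ c • ((K : ℝ≥0∞) ^ d * μH[(d:ℝ)] A) := smul_le_smul_of_nonneg_left h3 zero_le
    _ = (K : ℝ≥0∞) ^ d * (c • μH[(d:ℝ)] A) := by simp [ENNReal.smul_def, mul_left_comm]
    _ = (K : ℝ≥0∞) ^ d * volume A := by rw [h2]; rfl

private lemma pi_norm_le_l2_aux {d : ℕ} (a b : EuclideanSpace ℝ (Fin d)) :
    ‖a.ofLp - b.ofLp‖ ≤ ‖a - b‖ := by
  refine (pi_norm_le_iff_of_nonneg (norm_nonneg (a - b))).2 fun i => ?_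
  have he : ‖(a.ofLp - b.ofLp) i‖ = ‖(a - b : EuclideanSpace ℝ (Fin d)) i‖ := rfl
  rw [he, EuclideanSpace.norm_eq]
  have h1 : ‖(a - b : EuclideanSpace ℝ (Fin d)) i‖ ^ 2
      ≤ ∑ j, ‖(a - b : EuclideanSpace ℝ (Fin d)) j‖ ^ 2 :=
    Finset.single_le_sum (f := fun j => ‖(a - b : EuclideanSpace ℝ (Fin d)) j‖ ^ 2)
      (fun j _ => sq_nonneg _) (Finset.mem_univ i)
  calc ‖(a - b : EuclideanSpace ℝ (Fin d)) i‖
      = Real.sqrt (‖(a - b : EuclideanSpace ℝ (Fin d)) i‖ ^ 2) := by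
        rw [Real.sqrt_sq (norm_nonneg _)]
    _ ≤ Real.sqrt (∑ j, ‖(a - b : EuclideanSpace ℝ (Fin d)) j‖ ^ 2) := Real.sqrt_le_sqrt h1

private lemma l2_norm_le_pi_aux {d : ℕ} (hd : 1 ≤ d) (a b : EuclideanSpace ℝ (Fin d)) :
    ‖a - b‖ ≤ (d : ℝ) * ‖a.ofLp - b.ofLp‖ := by
  rw [EuclideanSpace.norm_eq]
  set r : ℝ := ‖a.ofLp - b.ofLp‖ with hr_def
  have hr0 : 0 ≤ r := norm_nonneg _
  have h1 : ∑ j, ‖(a - b : EuclideanSpace ℝ (Fin d)) j‖ ^ 2 ≤ (d : ℝ) * r ^ 2 := by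
    have := Finset.sum_le_card_nsmul Finset.univ
      (fun j => ‖(a - b : EuclideanSpace ℝ (Fin d)) j‖ ^ 2) (r ^ 2)
      (fun j _ => by
        have hj : ‖(a.ofLp - b.ofLp) j‖ ≤ r := norm_le_pi_norm (a.ofLp - b.ofLp) j
        have he : ‖(a.ofLp - b.ofLp) j‖ = ‖(a - b : EuclideanSpace ℝ (Fin d)) j‖ := rfl
        rw [he] at hj
        simp only
        nlinarith [norm_nonneg ((a - b : EuclideanSpace ℝ (Fin d)) j)])
    simpa [mul_comm] using this
  have hd1 : (1:ℝ) ≤ d := by exact_mod_cast hd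
  have h2 : (d : ℝ) * r ^ 2 ≤ ((d : ℝ) * r) ^ 2 := by nlinarith
  calc Real.sqrt (∑ j, ‖(a - b : EuclideanSpace ℝ (Fin d)) j‖ ^ 2)
      ≤ Real.sqrt (((d:ℝ) * r) ^ 2) := Real.sqrt_le_sqrt (h1.trans h2)
    _ = (d : ℝ) * r := Real.sqrt_sq (by positivity)

private lemma cube_diam_le_aux {d : ℕ} (hd : 1 ≤ d) (u : EuclideanSpace ℝ (Fin d))
    (hu : ∀ i, |u i| ≤ 1) : ‖u‖ ≤ d := by
  rw [EuclideanSpace.norm_eq]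
  have h1 : ∑ i, ‖u i‖ ^ 2 ≤ (d : ℝ) * 1 := by
    have := Finset.sum_le_card_nsmul Finset.univ (fun i => ‖u i‖ ^ 2) 1
      (fun i _ => by have := hu i; simp only [Real.norm_eq_abs]; nlinarith [abs_nonneg (u i)])
    simpa using this
  have hd1 : (1:ℝ) ≤ d := by exact_mod_cast hd
  have h2 : (d : ℝ) * 1 ≤ (d : ℝ) ^ 2 := by nlinarith
  calc Real.sqrt (∑ i, ‖u i‖ ^ 2) ≤ Real.sqrt ((d:ℝ)^2) := Real.sqrt_le_sqrt (h1.trans h2)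
    _ = d := by rw [Real.sqrt_sq (by positivity)]

theorem biLipschitz_change_of_variables {d : ℕ} (hd : 1 ≤ d) (C : ℝ) (hC : 1 < C)
    (x₂ : EuclideanSpace ℝ (Fin d) → EuclideanSpace ℝ (Fin d))
    (hbi : ∀ s ∈ Set.pi Set.univ (fun _ : Fin d => Set.Icc (0:ℝ) 1),
      ∀ s' ∈ Set.pi Set.univ (fun _ : Fin d => Set.Icc (0:ℝ) 1),
        ‖s - s'‖ / C ≤ ‖x₂ (WithLp.toLp 2 s) - x₂ (WithLp.toLp 2 s')‖ ∧ ‖x₂ (WithLp.toLp 2 s) - x₂ (WithLp.toLp 2 s')‖ ≤ C * ‖s - s'‖)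
    (S : EuclideanSpace ℝ (Fin d) → ℝ) (hSn : ∀ y, 0 ≤ S y)
    (hSloc : LocallyIntegrable S) :
    ∃ K : Set (EuclideanSpace ℝ (Fin d)), IsCompact K ∧ ∃ C' : ℝ, 0 < C' ∧
      ∀ s ∈ Set.pi Set.univ (fun _ : Fin d => Set.Icc (0:ℝ) 1),
        ∫ s' in Set.pi Set.univ (fun _ : Fin d => Set.Icc (0:ℝ) 1),
            S (x₂ (WithLp.toLp 2 s) - x₂ (WithLp.toLp 2 s'))
          ≤ C' * ∫ y in K, S y := by
  have hC0 : (0:ℝ) < C := lt_trans zero_lt_one hC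
  have hd0 : (0:ℝ) ≤ (d:ℝ) := Nat.cast_nonneg d
  have hd1 : (1:ℝ) ≤ (d:ℝ) := by exact_mod_cast hd
  have hCd0 : (0:ℝ) < C * d := by positivity
  set cube : Set (EuclideanSpace ℝ (Fin d)) :=
    WithLp.ofLp ⁻¹' Set.pi Set.univ (fun _ : Fin d => Set.Icc (0:ℝ) 1) with hcube_def
  have hcube_meas : MeasurableSet cube :=
    (MeasurableSet.univ_pi (fun _ => measurableSet_Icc)).preimage (WithLp.measurable_ofLp 2 _)
  -- Euclidean bi-Lipschitz bounds derived from `hbi`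
  have hbi' : ∀ a ∈ cube, ∀ b ∈ cube,
      ‖a - b‖ ≤ (C * d) * ‖x₂ a - x₂ b‖ ∧ ‖x₂ a - x₂ b‖ ≤ C * ‖a - b‖ := by
    intro a ha b hb
    obtain ⟨h1, h2⟩ := hbi a.ofLp ha b.ofLp hb
    constructor
    · have hp : ‖a.ofLp - b.ofLp‖ ≤ ‖x₂ a - x₂ b‖ * C := (div_le_iff₀ hC0).1 h1
      have he : ‖a - b‖ ≤ (d : ℝ) * ‖a.ofLp - b.ofLp‖ := l2_norm_le_pi_aux hd a b
      have hprod := mul_le_mul_of_nonneg_left hp hd0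
      nlinarith
    · have hA : ‖a.ofLp - b.ofLp‖ ≤ ‖a - b‖ := pi_norm_le_l2_aux a b
      calc ‖x₂ a - x₂ b‖ ≤ C * ‖a.ofLp - b.ofLp‖ := h2
        _ ≤ C * ‖a - b‖ := mul_le_mul_of_nonneg_left hA hC0.le
  have hdiam : ∀ a ∈ cube, ∀ b ∈ cube, ‖a - b‖ ≤ (d:ℝ) := by
    intro a ha b hb
    apply cube_diam_le_aux hd
    intro i
    have h1 := (Set.mem_univ_pi.1 ha) i
    have h2 := (Set.mem_univ_pi.1 hb) i
    simp only [Set.mem_Icc] at h1 h2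
    have he : (a - b : EuclideanSpace ℝ (Fin d)) i = a i - b i := rfl
    rw [he, abs_le]
    constructor <;> linarith [h1.1, h1.2, h2.1, h2.2]
  set K : Set (EuclideanSpace ℝ (Fin d)) := Metric.closedBall 0 (C * d) with hK_def
  have hK_meas : MeasurableSet K := measurableSet_closedBall
  refine ⟨K, isCompact_closedBall _ _, (C * d) ^ d, pow_pos hCd0 d, ?_⟩
  intro s0 hs0
  set s := WithLp.toLp 2 s0 with hs_def
  have hs : s ∈ cube := hs0
  set T : EuclideanSpace ℝ (Fin d) → EuclideanSpace ℝ (Fin d) :=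
    fun s' => x₂ s - x₂ s' with hT_def
  have hTsub : ∀ a b, T a - T b = x₂ b - x₂ a := by
    intro a b; simp only [hT_def]; abel
  have hT_lip : LipschitzOnWith C.toNNReal T cube := by
    apply LipschitzOnWith.of_dist_le_mul
    intro a ha b hb
    rw [dist_eq_norm, dist_eq_norm, hTsub a b, Real.coe_toNNReal _ hC0.le, norm_sub_rev a b]
    exact (hbi' b hb a ha).2
  have hT_injOn : Set.InjOn T cube := by
    intro a ha b hb hab
    have h1 : x₂ a = x₂ b := by
      have hx : x₂ s - x₂ a = x₂ s - x₂ b := hab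
      simpa [sub_right_inj] using hx
    have h2 := (hbi' a ha b hb).1
    rw [h1, sub_self, norm_zero, mul_zero] at h2
    have h4 : a - b = 0 := norm_eq_zero.1 (le_antisymm h2 (norm_nonneg _))
    exact sub_eq_zero.1 h4
  set g := Function.invFunOn T cube with hg_def
  have hg_inv : ∀ a ∈ cube, g (T a) = a := fun a ha => hT_injOn.leftInvOn_invFunOn ha
  have hg_lip : LipschitzOnWith (C * d).toNNReal g (T '' cube) := by
    apply LipschitzOnWith.of_dist_le_mul
    rintro _ ⟨a, ha, rfl⟩ _ ⟨b, hb, rfl⟩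
    rw [hg_inv a ha, hg_inv b hb, dist_eq_norm, dist_eq_norm, hTsub a b,
      Real.coe_toNNReal _ hCd0.le]
    calc ‖a - b‖ ≤ (C * d) * ‖x₂ a - x₂ b‖ := (hbi' a ha b hb).1
      _ = (C * d) * ‖x₂ b - x₂ a‖ := by rw [norm_sub_rev (x₂ a)]
  have hTK : T '' cube ⊆ K := by
    rintro _ ⟨a, ha, rfl⟩
    rw [hK_def, Metric.mem_closedBall, dist_zero_right]
    have h := (hbi' s hs a ha).2
    have hb := hdiam s hs a ha
    exact le_trans h (mul_le_mul_of_nonneg_left hb hC0.le)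
  have hT_aem : AEMeasurable T
      ((volume : Measure (EuclideanSpace ℝ (Fin d))).restrict cube) :=
    (hT_lip.continuousOn).aemeasurable hcube_meas
  set f : EuclideanSpace ℝ (Fin d) → ℝ≥0∞ := fun y => ENNReal.ofReal (S y) with hf_def
  have hS_aesm : AEStronglyMeasurable S (volume : Measure (EuclideanSpace ℝ (Fin d))) :=
    hSloc.aestronglyMeasurable
  have hf_aem : AEMeasurable f (volume : Measure (EuclideanSpace ℝ (Fin d))) :=
    ENNReal.measurable_ofReal.comp_aemeasurable hS_aesm.aemeasurable
  set cR : ℝ≥0∞ := ((C * d).toNNReal : ℝ≥0∞) ^ d with hcR_def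
  set ν : Measure (EuclideanSpace ℝ (Fin d)) :=
    Measure.map T ((volume : Measure (EuclideanSpace ℝ (Fin d))).restrict cube) with hν_def
  have hν_le : ν ≤ cR • (volume : Measure (EuclideanSpace ℝ (Fin d))).restrict K := by
    rw [Measure.le_iff]
    intro B hB
    rw [hν_def, Measure.map_apply_of_aemeasurable hT_aem hB,
      Measure.restrict_apply' hcube_meas]
    have hsub : T ⁻¹' B ∩ cube ⊆ g '' (B ∩ T '' cube) := by
      rintro a ⟨haB, ha⟩
      exact ⟨T a, ⟨haB, Set.mem_image_of_mem T ha⟩, hg_inv a ha⟩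
    calc volume (T ⁻¹' B ∩ cube) ≤ volume (g '' (B ∩ T '' cube)) := measure_mono hsub
      _ ≤ cR * volume (B ∩ T '' cube) :=
          vol_image_le_aux _ _ _ (hg_lip.mono Set.inter_subset_right)
      _ ≤ cR * volume (B ∩ K) :=
          mul_le_mul_right (measure_mono (Set.inter_subset_inter_right _ hTK)) _
      _ = (cR • (volume : Measure (EuclideanSpace ℝ (Fin d))).restrict K) B := by
          rw [Measure.smul_apply, Measure.restrict_apply hB, smul_eq_mul]
  have hν_ac : ν ≪ (volume : Measure (EuclideanSpace ℝ (Fin d))) :=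
    ((Measure.absolutelyContinuous_of_le hν_le).trans
      (Measure.smul_absolutelyContinuous)).trans
      (Measure.absolutelyContinuous_of_le Measure.restrict_le_self)
  have hf_ν : AEMeasurable f ν := hf_aem.mono_ac hν_ac
  have hL : ∫⁻ s' in cube, f (T s') ≤ cR * ∫⁻ y in K, f y := by
    calc ∫⁻ s' in cube, f (T s') = ∫⁻ y, f y ∂ν := (lintegral_map' hf_ν hT_aem).symm
      _ ≤ ∫⁻ y, f y ∂(cR • (volume : Measure (EuclideanSpace ℝ (Fin d))).restrict K) :=
          lintegral_mono' hν_le le_rfl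
      _ = cR * ∫⁻ y in K, f y := lintegral_smul_measure _ _
  have hSK_int : IntegrableOn S K := hSloc.integrableOn_isCompact (isCompact_closedBall _ _)
  have hR_fin : ∫⁻ y in K, f y ≠ ∞ :=
    ((lintegral_ofReal_le_lintegral_enorm S).trans_lt hSK_int.2).ne
  have hcR_fin : cR ≠ ∞ := by
    rw [hcR_def]
    exact ENNReal.pow_ne_top ENNReal.coe_ne_top
  have hS_ν : AEStronglyMeasurable S ν := hS_aesm.mono_ac hν_ac
  have hcomp : AEStronglyMeasurable (fun s' => S (T s'))
      ((volume : Measure (EuclideanSpace ℝ (Fin d))).restrict cube) :=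
    hS_ν.comp_aemeasurable hT_aem
  have hLHS : ∫ s' in cube, S (T s') = (∫⁻ s' in cube, f (T s')).toReal := by
    rw [integral_eq_lintegral_of_nonneg_ae (Filter.Eventually.of_forall fun y => hSn _) hcomp]
  have hRHS : ∫ y in K, S y = (∫⁻ y in K, f y).toReal := by
    rw [integral_eq_lintegral_of_nonneg_ae (Filter.Eventually.of_forall fun y => hSn _)
      (hS_aesm.restrict)]
  have keyineq : ∫ s' in cube, S (T s') ≤ (C * d) ^ d * ∫ y in K, S y := by
    rw [hLHS, hRHS]
    calc (∫⁻ s' in cube, f (T s')).toReal ≤ (cR * ∫⁻ y in K, f y).toReal :=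
        ENNReal.toReal_mono (ENNReal.mul_ne_top hcR_fin hR_fin) hL
      _ = (C * d) ^ d * (∫⁻ y in K, f y).toReal := by
        rw [ENNReal.toReal_mul]
        congr 1
        rw [hcR_def, ENNReal.toReal_pow, ENNReal.coe_toReal, Real.coe_toNNReal _ hCd0.le]
  have hcv := (EuclideanSpace.volume_preserving_symm_measurableEquiv_toLp (Fin d)).setIntegral_preimage_emb
    (MeasurableEquiv.measurableEmbedding _) (fun y => S (x₂ s - x₂ (WithLp.toLp 2 y)))
    (Set.pi Set.univ fun _ : Fin d => Set.Icc (0:ℝ) 1)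
  exact hcv.symm.trans_le keyineq
end
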